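/- (Case B, large endpoint distance.) Let c be a metric on V, let σ > 0, and let x be a feasible solution of the path-variant Held-Karp relaxation with respect to s and t satisfying c(s,t) ≥ (1/3 + σ)·c(x). Then there exists a Hamiltonian path from s to t in the complete graph on V whose cost is at most (5/3 − σ)·c(x). -/

import Mathlib

open Finset

namespace TSPPath

noncomputable section
open scoped Classical

/-- Edge set of the complete graph on `Fin n`: all unordered pairs of distinct vertices. -/
def Edges (n : ℕ) : Finset (Sym2 (Fin n)) := Finset.univ.filter (fun e => ¬ e.IsDiag)

/-- `cutSet n S` is `δ(S)`: the edges with exactly one endpoint in `S`. -/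
def cutSet (n : ℕ) (S : Finset (Fin n)) : Finset (Sym2 (Fin n)) :=
  (Edges n).filter (fun e => ∃ u v : Fin n, e = s(u, v) ∧ u ∈ S ∧ v ∉ S)

/-- `inSet n S` is `E(S)`: the edges with both endpoints in `S`. -/
def inSet (n : ℕ) (S : Finset (Fin n)) : Finset (Sym2 (Fin n)) :=
  (Edges n).filter (fun e => ∀ v ∈ e, v ∈ S)

/-- Degree of a vertex in an edge set. -/
def deg (n : ℕ) (H : Finset (Sym2 (Fin n))) (v : Fin n) : ℕ :=
  (H.filter (fun e => v ∈ e)).card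

/-- Degree of a vertex in an edge multiset (counting multiplicity). -/
def mdeg (n : ℕ) (L : Multiset (Sym2 (Fin n))) (v : Fin n) : ℕ :=
  (L.filter (fun e => v ∈ e)).card

/-- Feasibility for the path-variant Held–Karp relaxation with endpoints `s, t`. -/
def HKPathFeasible (n : ℕ) (s t : Fin n) (x : Sym2 (Fin n) → ℝ) : Prop :=
  (∀ e, 0 ≤ x e) ∧
  (∑ e ∈ cutSet n {s}, x e = 1) ∧
  (∑ e ∈ cutSet n {t}, x e = 1) ∧
  (∀ v : Fin n, v ≠ s → v ≠ t → ∑ e ∈ cutSet n {v}, x e = 2) ∧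
  (∀ S : Finset (Fin n), S.Nonempty → S ≠ Finset.univ →
      ((s ∈ S ∧ t ∉ S) ∨ (s ∉ S ∧ t ∈ S)) → 1 ≤ ∑ e ∈ cutSet n S, x e) ∧
  (∀ S : Finset (Fin n), S.Nonempty → S ≠ Finset.univ →
      ¬((s ∈ S ∧ t ∉ S) ∨ (s ∉ S ∧ t ∈ S)) → 2 ≤ ∑ e ∈ cutSet n S, x e)

/-- `c` is a metric: nonnegative, symmetric, vanishing on the diagonal, triangle inequality. -/
def IsMetric (n : ℕ) (c : Fin n → Fin n → ℝ) : Prop :=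
  (∀ u v, 0 ≤ c u v) ∧ (∀ u v, c u v = c v u) ∧ (∀ u, c u u = 0) ∧
  (∀ u v w, c u w ≤ c u v + c v w)

/-- Cost of an unordered edge (defined by symmetrization, which agrees with `c u v`
whenever `c` is symmetric). -/
def ecost (n : ℕ) (c : Fin n → Fin n → ℝ) (e : Sym2 (Fin n)) : ℝ :=
  Sym2.lift ⟨fun u v => (c u v + c v u) / 2, by intro u v; ring⟩ e

/-- `c(x) = ∑_{e ∈ E} x_e c(e)`. -/
def xcost (n : ℕ) (c : Fin n → Fin n → ℝ) (x : Sym2 (Fin n) → ℝ) : ℝ :=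
  ∑ e ∈ Edges n, x e * ecost n c e

/-- `c(F) = ∑_{e ∈ F} c(e)` for an edge set `F`. -/
def fcost (n : ℕ) (c : Fin n → Fin n → ℝ) (F : Finset (Sym2 (Fin n))) : ℝ :=
  ∑ e ∈ F, ecost n c e

/-- `H` is (the edge set of) a spanning tree of the complete graph on `Fin n`. -/
def IsSpanningTree (n : ℕ) (H : Finset (Sym2 (Fin n))) : Prop :=
  H ⊆ Edges n ∧ (SimpleGraph.fromEdgeSet (H : Set (Sym2 (Fin n)))).Connected ∧
    H.card = n - 1

/-- The wrong-parity set of an edge set `H`: internal vertices of odd degree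
together with the endpoints of even degree. -/
def wrongParity (n : ℕ) (s t : Fin n) (H : Finset (Sym2 (Fin n))) : Finset (Fin n) :=
  Finset.univ.filter (fun v =>
    if v = s ∨ v = t then Even (deg n H v) else Odd (deg n H v))

/-- `M` is a perfect matching on the vertex set `T`: vertex-disjoint edges covering
exactly the vertices of `T`. -/
def IsPerfectMatchingOn (n : ℕ) (T : Finset (Fin n)) (M : Finset (Sym2 (Fin n))) : Prop :=
  M ⊆ Edges n ∧ (∀ v ∈ T, deg n M v = 1) ∧ (∀ v : Fin n, v ∉ T → deg n M v = 0)

/-- `J` is a `T`-join: exactly the vertices of `T` have odd degree in `J`. -/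
def IsTJoin (n : ℕ) (T : Finset (Fin n)) (J : Finset (Sym2 (Fin n))) : Prop :=
  J ⊆ Edges n ∧ ∀ v : Fin n, Odd (deg n J v) ↔ v ∈ T

/-- There is a Hamiltonian path from `s` to `t` in the complete graph on `Fin n`
of cost (w.r.t. the metric `c`) at most `B`. -/
def ExistsHamPath (n : ℕ) (s t : Fin n) (c : Fin n → Fin n → ℝ) (B : ℝ) : Prop :=
  ∃ p : (⊤ : SimpleGraph (Fin n)).Walk s t,
    p.IsHamiltonian ∧ (p.edges.map (ecost n c)).sum ≤ B

/-- Connectivity of the multigraph `(V, L)` (equivalently, of its support graph,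
which must span all of `Fin n`). -/
def MConnected (n : ℕ) (L : Multiset (Sym2 (Fin n))) : Prop :=
  (SimpleGraph.fromEdgeSet {e | e ∈ L}).Connected

/-- The multiset of edges traversed by the walk given by a vertex list `w`. -/
def walkEdges (n : ℕ) (w : List (Fin n)) : Multiset (Sym2 (Fin n)) :=
  ((w.zip w.tail).map (fun p => s(p.1, p.2)) : List (Sym2 (Fin n)))

/-- `w` is an Eulerian trail from `s` to `t` of the edge multiset `L`: a walk from `s`
to `t` whose multiset of traversed edges is exactly `L` (with multiplicity). -/
def IsEulerianTrail (n : ℕ) (L : Multiset (Sym2 (Fin n))) (s t : Fin n)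
    (w : List (Fin n)) : Prop :=
  w.head? = some s ∧ w.getLast? = some t ∧ walkEdges n w = L

/-! ### Auxiliary development -/

variable {n : ℕ}

/-- Cost of a list of vertices, as a path. -/
def listCost (c : Fin n → Fin n → ℝ) : List (Fin n) → ℝ
  | [] => 0
  | [_] => 0
  | a :: b :: l => c a b + listCost c (b :: l)

lemma listCost_cons (c : Fin n → Fin n → ℝ) (a : Fin n) (l : List (Fin n)) :
    listCost c (a :: l) = (l.head?.elim 0 (c a)) + listCost c l := by
  cases l <;> simp [listCost]

lemma listCost_insert (c : Fin n → Fin n → ℝ) (p ℓ q : Fin n) (l₁ l₂ : List (Fin n)) :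
    listCost c (l₁ ++ p :: ℓ :: q :: l₂) =
      listCost c (l₁ ++ p :: q :: l₂) + (c p ℓ + c ℓ q - c p q) := by
  induction l₁ with
  | nil => simp [listCost]; ring
  | cons a l₁ ih =>
      rw [List.cons_append, List.cons_append, listCost_cons, listCost_cons, ih]
      cases l₁ <;> simp <;> ring

lemma listCost_reverse (c : Fin n → Fin n → ℝ) (hs : ∀ u v, c u v = c v u)
    (l : List (Fin n)) : listCost c l.reverse = listCost c l := by
  induction l with
  | nil => rfl
  | cons a l ih =>
      rw [List.reverse_cons, listCost_cons]
      have h1 : ∀ (m : List (Fin n)) (a : Fin n),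
          listCost c (m ++ [a]) = listCost c m + (m.getLast?.elim 0 (fun b => c b a)) := by
        intro m a
        induction m with
        | nil => simp [listCost]
        | cons b m ihm =>
            rw [List.cons_append, listCost_cons, listCost_cons, ihm]
            cases m <;> simp <;> ring
      rw [h1, ih]
      cases l <;> simp [hs a] <;> ring

/-- Trees grown by adding leaves. -/
inductive Grown : Finset (Fin n) → Finset (Sym2 (Fin n)) → Prop
  | single (v : Fin n) : Grown {v} ∅
  | step {S T} (p ℓ : Fin n) : Grown S T → p ∈ S → ℓ ∉ S →
      Grown (insert ℓ S) (insert s(p, ℓ) T)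

lemma Grown.support {S : Finset (Fin n)} {T : Finset (Sym2 (Fin n))} (h : Grown S T) :
    ∀ e ∈ T, ∀ v ∈ e, v ∈ S := by
  induction h with
  | single v => simp
  | step p ℓ hg hp hl ih =>
      intro e he v hv
      rcases Finset.mem_insert.1 he with rfl | he
      · rcases Sym2.mem_iff.1 hv with rfl | rfl
        · exact Finset.mem_insert_of_mem hp
        · exact Finset.mem_insert_self _ _
      · exact Finset.mem_insert_of_mem (ih e he v hv)

lemma Grown.nonempty {S : Finset (Fin n)} {T : Finset (Sym2 (Fin n))} (h : Grown S T) :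
    S.Nonempty := by
  induction h with
  | single v => exact ⟨v, Finset.mem_singleton_self v⟩
  | step p ℓ hg hp hl ih => exact ⟨ℓ, Finset.mem_insert_self _ _⟩

lemma Grown.card {S : Finset (Fin n)} {T : Finset (Sym2 (Fin n))} (h : Grown S T) :
    S.card = T.card + 1 := by
  induction h with
  | single v => simp
  | step p ℓ hg hp hl ih =>
      have hnew := fun hmem => hl (hg.support s(p, ℓ) hmem ℓ (Sym2.mem_mk_right p ℓ))
      rw [Finset.card_insert_of_notMem hl, Finset.card_insert_of_notMem hnew, ih]

lemma Grown.subset_edges {S : Finset (Fin n)} {T : Finset (Sym2 (Fin n))} (h : Grown S T) :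
    T ⊆ Edges n := by
  induction h with
  | single v => simp
  | step p ℓ hg hp hl ih =>
      intro e he
      rcases Finset.mem_insert.1 he with rfl | he
      · simp only [Edges, Finset.mem_filter, Finset.mem_univ, true_and]
        rw [Sym2.isDiag_iff_proj_eq]
        intro hpe
        exact hl ((show p = ℓ from hpe) ▸ hp)
      · exact ih he

lemma ecost_mk (c : Fin n → Fin n → ℝ) (hs : ∀ u v, c u v = c v u) (u v : Fin n) :
    ecost n c s(u, v) = c u v := by
  simp only [ecost, Sym2.lift_mk]
  rw [← hs u v]; ring

lemma head?_append_cons {α : Type*} (l₁ : List α) (a : α) (X Y : List α) :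
    (l₁ ++ a :: X).head? = (l₁ ++ a :: Y).head? := by
  cases l₁ <;> simp

lemma getLast?_append_ne_nil {α : Type*} (A : List α) {B : List α} (hB : B ≠ []) :
    (A ++ B).getLast? = B.getLast? := List.getLast?_append_of_ne_nil A hB

lemma Grown.hamlist {S : Finset (Fin n)} {T : Finset (Sym2 (Fin n))}
    {c : Fin n → Fin n → ℝ} (hc : IsMetric n c) (h : Grown S T) :
    ∀ s t : Fin n, s ∈ S → t ∈ S → s ≠ t →
      ∃ l : List (Fin n), l.head? = some s ∧ l.getLast? = some t ∧ l.Nodup ∧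
        l.toFinset = S ∧ listCost c l ≤ 2 * fcost n c T - c s t := by
  obtain ⟨hc0, hcs, hcd, hct⟩ := hc
  induction h with
  | single v =>
      intro s t hs ht hst
      rw [Finset.mem_singleton] at hs ht
      exact absurd (hs.trans ht.symm) hst
  | @step S T p ℓ hg hp hl ih =>
      intro s t hs ht hst
      have hnew : s(p, ℓ) ∉ T := fun hmem => hl (hg.support s(p, ℓ) hmem ℓ (Sym2.mem_mk_right p ℓ))
      have hfT : fcost n c (insert s(p, ℓ) T) = c p ℓ + fcost n c T := by
        rw [fcost, Finset.sum_insert hnew, ecost_mk c hcs, fcost]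
      -- the basic construction when the source is the new leaf ℓ
      have build : ∀ t' ∈ S, ∃ l : List (Fin n), l.head? = some ℓ ∧ l.getLast? = some t' ∧
          l.Nodup ∧ l.toFinset = insert ℓ S ∧
          listCost c l ≤ 2 * (c p ℓ + fcost n c T) - c ℓ t' := by
        intro t' ht'
        by_cases hS1 : S = {t'}
        · have hpt : p = t' := by rw [hS1, Finset.mem_singleton] at hp; exact hp
          have hT : T = ∅ := by
            have hcard := hg.card
            rw [hS1, Finset.card_singleton] at hcard
            exact Finset.card_eq_zero.1 (by omega)
          have hℓt : ℓ ≠ t' := fun hh => hl (hh ▸ ht')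
          refine ⟨[ℓ, t'], rfl, rfl, by simp [hℓt], by rw [hS1]; simp, ?_⟩
          have : listCost c [ℓ, t'] = c ℓ t' := by simp [listCost]
          rw [this, hT, hpt]
          have h1 := hcs t' ℓ
          have h2 : fcost n c (∅ : Finset (Sym2 (Fin n))) = 0 := by simp [fcost]
          rw [h2]; linarith
        · -- pick a starting point u₀ ∈ S with u₀ ≠ t'
          have hu : ∃ u₀, u₀ ∈ S ∧ u₀ ≠ t' ∧ c ℓ u₀ + c ℓ t' ≤ c u₀ t' + 2 * c p ℓ := by
            by_cases hpt : p = t'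
            · have : ∃ u ∈ S, u ≠ t' := by
                by_contra hcon
                push_neg at hcon
                exact hS1 (Finset.eq_singleton_iff_unique_mem.2 ⟨ht', fun u hu => hcon u hu⟩)
              obtain ⟨u, huS, hut⟩ := this
              refine ⟨u, huS, hut, ?_⟩
              have h1 := hct ℓ t' u
              have h2 := hcs t' u
              have h3 := hcs p ℓ
              have h4 := hcs ℓ t'
              rw [hpt] at h3 ⊢
              linarith
            · refine ⟨p, hp, hpt, ?_⟩
              have h1 := hct ℓ p t'
              have h2 := hcs ℓ p
              linarith
          obtain ⟨u₀, hu₀S, hu₀t, key⟩ := hu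
          obtain ⟨l₀, hh, hla, hnd, htf, hcost⟩ := ih u₀ t' hu₀S ht' hu₀t
          have hl₀ne : l₀ ≠ [] := by cases l₀ <;> simp_all
          have hℓl₀ : ℓ ∉ l₀ := by
            intro hmem
            exact hl (htf ▸ List.mem_toFinset.2 hmem)
          refine ⟨ℓ :: l₀, rfl, ?_, List.nodup_cons.2 ⟨hℓl₀, hnd⟩, by simp [htf], ?_⟩
          · cases l₀ with
            | nil => exact absurd rfl hl₀ne
            | cons a l₀' => rw [List.getLast?_cons_cons]; exact hla
          · rw [listCost_cons, hh]
            simp only [Option.elim]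
            linarith
      by_cases hsl : s = ℓ
      · subst hsl
        have htS : t ∈ S := by
          rcases Finset.mem_insert.1 ht with rfl | h'
          · exact absurd rfl hst
          · exact h'
        obtain ⟨l, h1, h2, h3, h4, h5⟩ := build t htS
        exact ⟨l, h1, h2, h3, h4, by rw [hfT]; exact h5⟩
      by_cases htl : t = ℓ
      · subst htl
        have hsS : s ∈ S := by
          rcases Finset.mem_insert.1 hs with rfl | h'
          · exact absurd rfl hst
          · exact h'
        obtain ⟨l, h1, h2, h3, h4, h5⟩ := build s hsS
        refine ⟨l.reverse, ?_, ?_, List.nodup_reverse.2 h3, by rw [List.toFinset_reverse]; exact h4, ?_⟩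
        · rw [List.head?_reverse]; exact h2
        · rw [List.getLast?_reverse]; exact h1
        · rw [listCost_reverse c hcs, hfT]
          have := hcs t s
          linarith
      · -- both endpoints are old
        have hsS : s ∈ S := by
          rcases Finset.mem_insert.1 hs with rfl | h'
          · exact absurd rfl hsl
          · exact h'
        have htS : t ∈ S := by
          rcases Finset.mem_insert.1 ht with rfl | h'
          · exact absurd rfl htl
          · exact h'
        obtain ⟨l₀, hh, hla, hnd, htf, hcost⟩ := ih s t hsS htS hst
        have hpl₀ : p ∈ l₀ := List.mem_toFinset.1 (htf ▸ hp)
        obtain ⟨l₁, l₂, heq⟩ := List.append_of_mem hpl₀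
        have hℓl₀ : ℓ ∉ l₀ := fun hmem => hl (htf ▸ List.mem_toFinset.2 hmem)
        cases l₂ with
        | cons q l₂' =>
            refine ⟨l₁ ++ p :: ℓ :: q :: l₂', ?_, ?_, ?_, ?_, ?_⟩
            · rw [head?_append_cons l₁ p (ℓ :: q :: l₂') (q :: l₂'), ← heq]; exact hh
            · rw [getLast?_append_ne_nil l₁ (by simp), List.getLast?_cons_cons,
                List.getLast?_cons_cons]
              rw [heq, getLast?_append_ne_nil l₁ (by simp), List.getLast?_cons_cons] at hla
              exact hla
            · have hperm : (l₁ ++ p :: ℓ :: q :: l₂').Perm (ℓ :: l₀) := by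
                have h1 : l₁ ++ p :: ℓ :: q :: l₂' = (l₁ ++ [p]) ++ ℓ :: (q :: l₂') := by simp
                have h2 : (l₁ ++ [p]) ++ (q :: l₂') = l₀ := by rw [heq]; simp
                rw [h1]
                exact (List.perm_middle).trans (by rw [h2])
              exact hperm.nodup_iff.2 (List.nodup_cons.2 ⟨hℓl₀, hnd⟩)
            · have hperm : (l₁ ++ p :: ℓ :: q :: l₂').Perm (ℓ :: l₀) := by
                have h1 : l₁ ++ p :: ℓ :: q :: l₂' = (l₁ ++ [p]) ++ ℓ :: (q :: l₂') := by simp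
                have h2 : (l₁ ++ [p]) ++ (q :: l₂') = l₀ := by rw [heq]; simp
                rw [h1]
                exact (List.perm_middle).trans (by rw [h2])
              rw [List.toFinset_eq_of_perm _ _ hperm]
              simp [htf]
            · have hins := listCost_insert c p ℓ q l₁ l₂'
              rw [hins, ← heq, hfT]
              have h1 := hct ℓ p q
              have h2 := hcs ℓ p
              linarith
        | nil =>
            -- p is the last element, so p = t
            have hpt : p = t := by
              rw [heq, List.getLast?_concat] at hla
              exact (Option.some_inj.1 hla)
            have hl₁ne : l₁ ≠ [] := by
              intro hnil
              rw [hnil] at heq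
              simp only [List.nil_append] at heq
              rw [heq] at hh
              simp at hh
              apply hst
              rw [← hh, hpt]
            rcases List.eq_nil_or_concat l₁ with rfl | ⟨l₁', q, hq⟩
            · exact absurd rfl hl₁ne
            rw [List.concat_eq_append] at hq
            subst hq
            refine ⟨l₁' ++ q :: ℓ :: p :: [], ?_, ?_, ?_, ?_, ?_⟩
            · rw [head?_append_cons l₁' q (ℓ :: p :: []) (p :: [])]
              rw [heq] at hh
              rw [List.append_assoc] at hh
              simpa using hh
            · rw [getLast?_append_ne_nil l₁' (by simp)]
              simp [hpt]
            · have hperm : (l₁' ++ q :: ℓ :: p :: []).Perm (ℓ :: l₀) := by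
                have h1 : l₁' ++ q :: ℓ :: p :: [] = ((l₁' ++ [q])) ++ ℓ :: [p] := by simp
                have h2 : (l₁' ++ [q]) ++ [p] = l₀ := by rw [heq]
                rw [h1]
                exact (List.perm_middle).trans (by rw [h2])
              exact hperm.nodup_iff.2 (List.nodup_cons.2 ⟨hℓl₀, hnd⟩)
            · have hperm : (l₁' ++ q :: ℓ :: p :: []).Perm (ℓ :: l₀) := by
                have h1 : l₁' ++ q :: ℓ :: p :: [] = ((l₁' ++ [q])) ++ ℓ :: [p] := by simp
                have h2 : (l₁' ++ [q]) ++ [p] = l₀ := by rw [heq]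
                rw [h1]
                exact (List.perm_middle).trans (by rw [h2])
              rw [List.toFinset_eq_of_perm _ _ hperm]
              simp [htf]
            · have hins := listCost_insert c q ℓ p l₁' []
              have heq' : l₁' ++ q :: p :: [] = l₀ := by rw [heq]; simp
              rw [hins, heq', hfT]
              have h1 := hct q p ℓ
              have h2 := hcs ℓ p
              have h3 := hcs q ℓ
              linarith

lemma walk_of_list (c : Fin n → Fin n → ℝ) (hcs : ∀ u v, c u v = c v u) :
    ∀ (l : List (Fin n)) (a b : Fin n), l.Nodup → l.head? = some a → l.getLast? = some b →
      ∃ p : (⊤ : SimpleGraph (Fin n)).Walk a b, p.support = l ∧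
        (p.edges.map (ecost n c)).sum = listCost c l := by
  intro l
  induction l with
  | nil => intro a b _ hh _; simp at hh
  | cons v l ih =>
      intro a b hnd hh hla
      have hav : v = a := by simpa using hh
      subst hav
      cases l with
      | nil =>
          have hba : v = b := by simpa using hla
          subst hba
          exact ⟨SimpleGraph.Walk.nil, by simp, by simp [listCost]⟩
      | cons w l' =>
          have hne : v ≠ w := by
            intro hvw
            exact (List.nodup_cons.1 hnd).1 (by rw [hvw]; exact List.mem_cons_self)
          rw [List.getLast?_cons_cons] at hla
          obtain ⟨p', hsup, hsum⟩ := ih w b (List.nodup_cons.1 hnd).2 rfl hla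
          refine ⟨SimpleGraph.Walk.cons (by simp [hne]) p', ?_, ?_⟩
          · simp [hsup]
          · rw [SimpleGraph.Walk.edges_cons, List.map_cons, List.sum_cons, hsum,
              ecost_mk c hcs, listCost]

lemma exists_cross_edge {G : SimpleGraph (Fin n)} {S : Finset (Fin n)} :
    ∀ {u v : Fin n}, G.Walk u v → u ∈ S → v ∉ S →
      ∃ a b, G.Adj a b ∧ a ∈ S ∧ b ∉ S := by
  intro u v w
  induction w with
  | nil => intro h h'; exact absurd h h'
  | @cons u u' v adj w' ih =>
      intro hu hv
      by_cases h : u' ∈ S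
      · exact ih h hv
      · exact ⟨u, u', adj, hu, h⟩

lemma grown_of_connected {E₀ : Finset (Sym2 (Fin n))}
    (hconn : ∀ a b : Fin n,
      (SimpleGraph.fromEdgeSet (E₀ : Set (Sym2 (Fin n)))).Reachable a b) (v₀ : Fin n) :
    ∃ T : Finset (Sym2 (Fin n)), T ⊆ E₀ ∧ Grown Finset.univ T := by
  have main : ∀ (k : ℕ) (S : Finset (Fin n)) (T : Finset (Sym2 (Fin n))),
      Grown S T → T ⊆ E₀ → S.card + k = n →
      ∃ T', T' ⊆ E₀ ∧ Grown Finset.univ T' := by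
    intro k
    induction k with
    | zero =>
        intro S T hg hTE hcard
        have : S = Finset.univ := Finset.eq_univ_of_card S (by simpa using hcard)
        exact ⟨T, hTE, this ▸ hg⟩
    | succ k ihk =>
        intro S T hg hTE hcard
        have hne : ∃ v, v ∉ S := by
          by_contra hcon
          push_neg at hcon
          have : S = Finset.univ := Finset.eq_univ_iff_forall.2 hcon
          rw [this] at hcard
          rw [Finset.card_univ, Fintype.card_fin] at hcard
          omega
        obtain ⟨v, hv⟩ := hne
        obtain ⟨u₀, hu₀⟩ := hg.nonempty
        obtain ⟨w⟩ := hconn u₀ v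
        obtain ⟨a, b, adj, haS, hbS⟩ := exists_cross_edge w hu₀ hv
        rw [SimpleGraph.fromEdgeSet_adj] at adj
        have hg' : Grown (insert b S) (insert s(a, b) T) := hg.step a b haS hbS
        refine ihk (insert b S) (insert s(a, b) T) hg' ?_ ?_
        · intro e he
          rcases Finset.mem_insert.1 he with rfl | he
          · exact adj.1
          · exact hTE he
        · rw [Finset.card_insert_of_notMem hbS]
          omega
  exact main (n - 1) {v₀} ∅ (Grown.single v₀) (Finset.empty_subset _)
    (by have := v₀.pos; simp; omega)

/-- Sum of `x` over an edge set. -/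
def xsum (x : Sym2 (Fin n) → ℝ) (P : Finset (Sym2 (Fin n))) : ℝ := ∑ e ∈ P, x e

/-- Weighted cost of `x` over an edge set. -/
def xpcost (c : Fin n → Fin n → ℝ) (x : Sym2 (Fin n) → ℝ) (P : Finset (Sym2 (Fin n))) : ℝ :=
  ∑ e ∈ P, x e * ecost n c e

lemma ecost_nonneg {c : Fin n → Fin n → ℝ} (hc0 : ∀ u v, 0 ≤ c u v) (e : Sym2 (Fin n)) :
    0 ≤ ecost n c e := by
  induction e using Sym2.ind with
  | _ a b =>
      simp only [ecost, Sym2.lift_mk]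
      have := hc0 a b; have := hc0 b a
      linarith

lemma edge_rep {e : Sym2 (Fin n)} (he : e ∈ Edges n) : ∃ a b : Fin n, a ≠ b ∧ e = s(a, b) := by
  induction e using Sym2.ind with
  | _ a b =>
      refine ⟨a, b, ?_, rfl⟩
      intro hab
      rw [Edges, Finset.mem_filter] at he
      exact he.2 (Sym2.isDiag_iff_proj_eq.2 hab)

lemma cutSet_singleton (v : Fin n) :
    cutSet n {v} = (Edges n).filter (fun e => v ∈ e) := by
  ext e
  simp only [cutSet, Finset.mem_filter, Finset.mem_singleton, and_congr_right_iff]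
  intro he
  constructor
  · rintro ⟨u, w, rfl, rfl, -⟩
    exact Sym2.mem_mk_left _ _
  · intro hv
    obtain ⟨a, b, hab, rfl⟩ := edge_rep he
    rcases Sym2.mem_iff.1 hv with rfl | rfl
    · exact ⟨v, b, rfl, rfl, by simpa using hab.symm⟩
    · exact ⟨v, a, Sym2.eq_swap, rfl, by simpa using hab⟩

lemma mem_inSet_iff {a b : Fin n} (hab : a ≠ b) {B : Finset (Fin n)} :
    s(a, b) ∈ inSet n B ↔ a ∈ B ∧ b ∈ B := by
  have hE : s(a, b) ∈ Edges n := by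
    simp only [Edges, Finset.mem_filter, Finset.mem_univ, true_and]
    rw [Sym2.isDiag_iff_proj_eq]; exact hab
  simp only [inSet, Finset.mem_filter, hE, true_and]
  constructor
  · intro h
    exact ⟨h a (Sym2.mem_mk_left _ _), h b (Sym2.mem_mk_right _ _)⟩
  · rintro ⟨h1, h2⟩ v hv
    rcases Sym2.mem_iff.1 hv with rfl | rfl
    · exact h1
    · exact h2

lemma mem_cutSet_iff {a b : Fin n} (hab : a ≠ b) {B : Finset (Fin n)} :
    s(a, b) ∈ cutSet n B ↔ ((a ∈ B ∧ b ∉ B) ∨ (b ∈ B ∧ a ∉ B)) := by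
  have hE : s(a, b) ∈ Edges n := by
    simp only [Edges, Finset.mem_filter, Finset.mem_univ, true_and]
    rw [Sym2.isDiag_iff_proj_eq]; exact hab
  simp only [cutSet, Finset.mem_filter, hE, true_and]
  constructor
  · rintro ⟨u, w, huw, hu, hw⟩
    rcases Sym2.eq_iff.1 huw with ⟨rfl, rfl⟩ | ⟨rfl, rfl⟩
    · exact Or.inl ⟨hu, hw⟩
    · exact Or.inr ⟨hu, hw⟩
  · rintro (⟨h1, h2⟩ | ⟨h1, h2⟩)
    · exact ⟨a, b, rfl, h1, h2⟩
    · exact ⟨b, a, Sym2.eq_swap, h1, h2⟩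

lemma cut_identity (x : Sym2 (Fin n) → ℝ) (B : Finset (Fin n)) :
    ∑ v ∈ B, ∑ e ∈ cutSet n {v}, x e =
      2 * xsum x (inSet n B) + xsum x (cutSet n B) := by
  have step1 : ∑ v ∈ B, ∑ e ∈ cutSet n {v}, x e =
      ∑ e ∈ Edges n, ((B.filter (fun v => v ∈ e)).card : ℝ) * x e := by
    have : ∀ v ∈ B, ∑ e ∈ cutSet n {v}, x e = ∑ e ∈ Edges n, if v ∈ e then x e else 0 := by
      intro v _
      rw [cutSet_singleton, Finset.sum_filter]
    rw [Finset.sum_congr rfl this, Finset.sum_comm]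
    refine Finset.sum_congr rfl fun e _ => ?_
    rw [← Finset.sum_filter, Finset.sum_const, nsmul_eq_mul]
  rw [step1]
  have step2 : ∀ e ∈ Edges n, ((B.filter (fun v => v ∈ e)).card : ℝ) * x e =
      (if e ∈ inSet n B then 2 * x e else 0) + (if e ∈ cutSet n B then x e else 0) := by
    intro e he
    obtain ⟨a, b, hab, rfl⟩ := edge_rep he
    have hflt : B.filter (fun v => v ∈ s(a, b)) = B.filter (fun v => v = a ∨ v = b) := by
      apply Finset.filter_congr
      intro v _
      simp [Sym2.mem_iff]
    rw [hflt, Finset.filter_or, Finset.filter_eq', Finset.filter_eq']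
    have hcard2 : ({a} ∪ {b} : Finset (Fin n)).card = 2 := by
      rw [Finset.card_union_of_disjoint (by simp [hab])]
      rfl
    by_cases ha : a ∈ B <;> by_cases hb : b ∈ B <;>
      simp [ha, hb, mem_inSet_iff hab, mem_cutSet_iff hab, hab, hcard2] <;> ring
  rw [Finset.sum_congr rfl step2, Finset.sum_add_distrib]
  congr 1
  · rw [Finset.sum_ite_mem, Finset.inter_eq_right.2 (show inSet n B ⊆ Edges n from Finset.filter_subset _ _)]
    rw [xsum, Finset.mul_sum]
  · rw [Finset.sum_ite_mem, Finset.inter_eq_right.2 (show cutSet n B ⊆ Edges n from Finset.filter_subset _ _)]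
    rfl


lemma cutSet_univ : cutSet n Finset.univ = ∅ := by
  ext e
  simp [cutSet]

lemma inSet_univ : inSet n Finset.univ = Edges n := by
  ext e
  simp [inSet]

section HK
variable {s t : Fin n} {x : Sym2 (Fin n) → ℝ}

lemma hk_degree_sum (hx : HKPathFeasible n s t x) (hst : s ≠ t) (B : Finset (Fin n)) :
    ∑ v ∈ B, ∑ e ∈ cutSet n {v}, x e =
      2 * (B.card : ℝ) - (if s ∈ B then 1 else 0) - (if t ∈ B then 1 else 0) := by
  obtain ⟨hx0, hxs, hxt, hxv, h5, h6⟩ := hx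
  have hpt : ∀ v ∈ B, ∑ e ∈ cutSet n {v}, x e =
      2 - (if v = s then (1 : ℝ) else 0) - (if v = t then (1 : ℝ) else 0) := by
    intro v _
    by_cases hvs : v = s
    · subst hvs
      simp [hxs, if_neg hst]
      try norm_num
    · by_cases hvt : v = t
      · subst hvt
        simp [hxt, hvs]
        try norm_num
      · simp [hxv v hvs hvt, hvs, hvt]
  rw [Finset.sum_congr rfl hpt]
  rw [Finset.sum_sub_distrib, Finset.sum_sub_distrib, Finset.sum_const]
  congr 1
  · congr 1
    · rw [nsmul_eq_mul]; ring
    · rw [Finset.sum_ite_eq' B s (fun _ => (1 : ℝ))]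
  · rw [Finset.sum_ite_eq' B t (fun _ => (1 : ℝ))]

lemma hk_xsum_univ (hx : HKPathFeasible n s t x) (hst : s ≠ t) :
    xsum x (Edges n) = (n : ℝ) - 1 := by
  have hid := cut_identity x (Finset.univ : Finset (Fin n))
  rw [cutSet_univ, inSet_univ] at hid
  have hds := hk_degree_sum hx hst Finset.univ
  rw [hds] at hid
  simp only [Finset.mem_univ, if_pos, Finset.card_univ, Fintype.card_fin] at hid
  have : xsum x (∅ : Finset (Sym2 (Fin n))) = 0 := by simp [xsum]
  rw [this] at hid
  linarith

lemma hk_inSet_le (hx : HKPathFeasible n s t x) (hst : s ≠ t) (B : Finset (Fin n))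
    (hne : B.Nonempty) : xsum x (inSet n B) ≤ (B.card : ℝ) - 1 := by
  by_cases hBu : B = Finset.univ
  · subst hBu
    rw [inSet_univ, hk_xsum_univ hx hst, Finset.card_univ, Fintype.card_fin]
  · have hid := cut_identity x B
    rw [hk_degree_sum hx hst B] at hid
    obtain ⟨hx0, hxs, hxt, hxv, h5, h6⟩ := hx
    by_cases hone : ((s ∈ B ∧ t ∉ B) ∨ (s ∉ B ∧ t ∈ B))
    · have hcut : 1 ≤ xsum x (cutSet n B) := h5 B hne hBu hone
      rcases hone with ⟨h1, h2⟩ | ⟨h1, h2⟩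
      · rw [if_pos h1, if_neg h2] at hid; linarith
      · rw [if_neg h1, if_pos h2] at hid; linarith
    · have hcut : 2 ≤ xsum x (cutSet n B) := h6 B hne hBu hone
      have hi1 : (0 : ℝ) ≤ (if s ∈ B then (1:ℝ) else 0) := by positivity
      have hi2 : (0 : ℝ) ≤ (if t ∈ B then (1:ℝ) else 0) := by positivity
      linarith

end HK

/-- Invariant of the Kruskal-style greedy run. -/
structure KInv (n : ℕ) (P : Finset (Sym2 (Fin n))) (Part : Finset (Finset (Fin n)))
    (T : Finset (Sym2 (Fin n))) : Prop where
  blocks_nonempty : ∀ B ∈ Part, B.Nonempty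
  blocks_disj : ∀ B₁ ∈ Part, ∀ B₂ ∈ Part, B₁ ≠ B₂ → Disjoint B₁ B₂
  blocks_cover : ∀ v : Fin n, ∃ B ∈ Part, v ∈ B
  card_eq : T.card + Part.card = n
  intra : ∀ e ∈ P, ∃ B ∈ Part, ∀ v ∈ e, v ∈ B
  TsubP : T ⊆ P
  TsubE : T ⊆ Edges n
  reach : ∀ B ∈ Part, ∀ a ∈ B, ∀ b ∈ B,
    (SimpleGraph.fromEdgeSet (T : Set (Sym2 (Fin n)))).Reachable a b

lemma KInv.sum_card {P : Finset (Sym2 (Fin n))} {Part : Finset (Finset (Fin n))}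
    {T : Finset (Sym2 (Fin n))} (hI : KInv n P Part T) :
    ∑ B ∈ Part, B.card = n := by
  have : Finset.univ = Part.biUnion id := by
    apply Finset.eq_of_subset_of_card_le
    · intro v _
      obtain ⟨B, hB, hvB⟩ := hI.blocks_cover v
      exact Finset.mem_biUnion.2 ⟨B, hB, hvB⟩
    · exact Finset.card_le_univ _
  have hcard : (Part.biUnion id).card = ∑ B ∈ Part, B.card :=
    Finset.card_biUnion (fun B₁ h₁ B₂ h₂ hne => hI.blocks_disj B₁ h₁ B₂ h₂ hne)
  rw [← hcard, ← this, Finset.card_univ, Fintype.card_fin]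

lemma KInv.xsum_le {x : Sym2 (Fin n) → ℝ} (hx0 : ∀ e, 0 ≤ x e)
    (hpoly : ∀ B : Finset (Fin n), B.Nonempty → xsum x (inSet n B) ≤ (B.card : ℝ) - 1)
    {P : Finset (Sym2 (Fin n))} {Part : Finset (Finset (Fin n))}
    {T : Finset (Sym2 (Fin n))} (hI : KInv n P Part T) (hP : P ⊆ Edges n) :
    xsum x P ≤ (T.card : ℝ) := by
  have hsub : P ⊆ Part.biUnion (fun B => inSet n B) := by
    intro e he
    obtain ⟨B, hB, hall⟩ := hI.intra e he
    refine Finset.mem_biUnion.2 ⟨B, hB, ?_⟩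
    rw [inSet, Finset.mem_filter]
    exact ⟨hP he, hall⟩
  have h1 : xsum x P ≤ xsum x (Part.biUnion (fun B => inSet n B)) :=
    Finset.sum_le_sum_of_subset_of_nonneg hsub (fun e _ _ => hx0 e)
  have h2 : xsum x (Part.biUnion (fun B => inSet n B)) = ∑ B ∈ Part, xsum x (inSet n B) := by
    rw [xsum]
    refine Finset.sum_biUnion ?_
    intro B₁ h₁ B₂ h₂ hne
    have hd := hI.blocks_disj B₁ h₁ B₂ h₂ hne
    simp only [Function.onFun]
    rw [Finset.disjoint_left]
    intro e he₁ he₂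
    rw [inSet, Finset.mem_filter] at he₁ he₂
    obtain ⟨a, b, hab, rfl⟩ := edge_rep he₁.1
    have ha₁ : a ∈ B₁ := he₁.2 a (Sym2.mem_mk_left _ _)
    have ha₂ : a ∈ B₂ := he₂.2 a (Sym2.mem_mk_left _ _)
    exact (Finset.disjoint_left.1 hd) ha₁ ha₂
  have h3 : ∑ B ∈ Part, xsum x (inSet n B) ≤ ∑ B ∈ Part, ((B.card : ℝ) - 1) :=
    Finset.sum_le_sum (fun B hB => hpoly B (hI.blocks_nonempty B hB))
  have h4 : ∑ B ∈ Part, ((B.card : ℝ) - 1) = (n : ℝ) - Part.card := by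
    rw [Finset.sum_sub_distrib, Finset.sum_const, nsmul_eq_mul, mul_one]
    have := hI.sum_card
    have hcast : (∑ B ∈ Part, (B.card : ℝ)) = (n : ℝ) := by
      rw [← Nat.cast_sum, this]
    rw [hcast]
  have h5 : (n : ℝ) - Part.card = (T.card : ℝ) := by
    have := hI.card_eq
    have : (T.card : ℝ) + (Part.card : ℝ) = (n : ℝ) := by exact_mod_cast congrArg Nat.cast this
    linarith
  linarith

/-- Any finite set can be listed in nondecreasing order of a real-valued key. -/
lemma exists_sorted_list {β : Type*} [DecidableEq β] (F : Finset β) (f : β → ℝ) :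
    ∃ l : List β, l.Nodup ∧ l.toFinset = F ∧ List.Pairwise (fun e e' => f e ≤ f e') l := by
  suffices h : ∀ (k : ℕ) (F : Finset β), F.card = k →
      ∃ l : List β, l.Nodup ∧ l.toFinset = F ∧ List.Pairwise (fun e e' => f e ≤ f e') l by
    exact h F.card F rfl
  intro k
  induction k with
  | zero =>
      intro F hcard
      rw [Finset.card_eq_zero] at hcard
      exact ⟨[], by simp, by simp [hcard], by simp⟩
  | succ k ih =>
      intro F hcard
      have hne : F.Nonempty := by
        rw [← Finset.card_pos, hcard]; omega
      obtain ⟨m, hm, hmin⟩ := Finset.exists_min_image F f hne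
      obtain ⟨l', hnd, htf, hpw⟩ := ih (F.erase m) (by rw [Finset.card_erase_of_mem hm, hcard]; omega)
      refine ⟨m :: l', ?_, ?_, ?_⟩
      · refine List.nodup_cons.2 ⟨?_, hnd⟩
        intro hmem
        have := htf ▸ List.mem_toFinset.2 hmem
        exact (Finset.mem_erase.1 this).1 rfl
      · rw [List.toFinset_cons, htf, Finset.insert_erase hm]
      · refine List.pairwise_cons.2 ⟨?_, hpw⟩
        intro e he
        have : e ∈ F.erase m := htf ▸ List.mem_toFinset.2 he
        exact hmin e (Finset.mem_of_mem_erase this)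

lemma Hx_step {ce γ xe xp xs Tc fT : ℝ} (hbase : fT ≤ xp + ce * (Tc - xs))
    (hce : ce ≤ γ) (hslack : 0 ≤ Tc - (xe + xs)) :
    fT ≤ (xe * ce + xp) + γ * (Tc - (xe + xs)) := by
  have h1 : ce * (Tc - (xe + xs)) ≤ γ * (Tc - (xe + xs)) :=
    mul_le_mul_of_nonneg_right hce hslack
  have h2 : ce * (Tc - xs) = ce * xe + ce * (Tc - (xe + xs)) := by ring
  nlinarith [h1, h2]

lemma kruskal_run (c : Fin n → Fin n → ℝ) (x : Sym2 (Fin n) → ℝ)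
    (hx0 : ∀ e, 0 ≤ x e)
    (hpoly : ∀ B : Finset (Fin n), B.Nonempty → xsum x (inSet n B) ≤ (B.card : ℝ) - 1) :
    ∀ (l : List (Sym2 (Fin n))) (P : Finset (Sym2 (Fin n))) (Part : Finset (Finset (Fin n)))
      (T : Finset (Sym2 (Fin n))),
      KInv n P Part T → P ⊆ Edges n → (∀ e ∈ l, e ∈ Edges n) → (∀ e ∈ l, e ∉ P) → l.Nodup →
      List.Pairwise (fun e f => ecost n c e ≤ ecost n c f) l →
      (∀ e ∈ P, ∀ f ∈ l, ecost n c e ≤ ecost n c f) →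
      (∀ γ : ℝ, (∀ e ∈ P, ecost n c e ≤ γ) → (∀ f ∈ l, γ ≤ ecost n c f) →
        fcost n c T ≤ xpcost c x P + γ * ((T.card : ℝ) - xsum x P)) →
      ∃ Part' T', KInv n (P ∪ l.toFinset) Part' T' ∧
        ∀ γ : ℝ, (∀ e ∈ P ∪ l.toFinset, ecost n c e ≤ γ) →
          fcost n c T' ≤ xpcost c x (P ∪ l.toFinset) +
            γ * ((T'.card : ℝ) - xsum x (P ∪ l.toFinset)) := by
  intro l
  induction l with
  | nil =>
      intro P Part T hI hPE _ _ _ _ _ Hx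
      rw [List.toFinset_nil, Finset.union_empty]
      exact ⟨Part, T, hI, fun γ hγ => Hx γ hγ (by simp)⟩
  | cons e l ih =>
      intro P Part T hI hPE hlE hlP hnd hpw hPl Hx
      have heE : e ∈ Edges n := hlE e List.mem_cons_self
      obtain ⟨a, b, hab, rfl⟩ := edge_rep heE
      have henP : s(a, b) ∉ P := hlP _ List.mem_cons_self
      have hγe_low : ∀ g ∈ P, ecost n c g ≤ ecost n c s(a, b) :=
        fun g hg => hPl g hg _ List.mem_cons_self
      have hγe_high : ∀ f ∈ (s(a, b) :: l), ecost n c s(a, b) ≤ ecost n c f := by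
        intro f hf
        rcases List.mem_cons.1 hf with rfl | hf
        · exact le_refl _
        · exact (List.pairwise_cons.1 hpw).1 f hf
      have hbase := Hx (ecost n c s(a, b)) hγe_low hγe_high
      have hxsumP' : xsum x (insert s(a, b) P) = x s(a, b) + xsum x P := Finset.sum_insert henP
      have hxpP' : xpcost c x (insert s(a, b) P) =
          x s(a, b) * ecost n c s(a, b) + xpcost c x P := Finset.sum_insert henP
      have hunion : P ∪ (s(a, b) :: l).toFinset = (insert s(a, b) P) ∪ l.toFinset := by
        rw [List.toFinset_cons, Finset.union_insert, Finset.insert_union]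
      have hP'E : insert s(a, b) P ⊆ Edges n := Finset.insert_subset heE hPE
      -- facts for the tail
      have hlE' : ∀ f ∈ l, f ∈ Edges n := fun f hf => hlE f (List.mem_cons_of_mem _ hf)
      have hlP' : ∀ f ∈ l, f ∉ insert s(a, b) P := by
        intro f hf hmem
        rcases Finset.mem_insert.1 hmem with rfl | hmem
        · exact (List.nodup_cons.1 hnd).1 hf
        · exact hlP f (List.mem_cons_of_mem _ hf) hmem
      have hnd' : l.Nodup := (List.nodup_cons.1 hnd).2
      have hpw' : List.Pairwise (fun e f => ecost n c e ≤ ecost n c f) l :=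
        (List.pairwise_cons.1 hpw).2
      have hPl' : ∀ g ∈ insert s(a, b) P, ∀ f ∈ l, ecost n c g ≤ ecost n c f := by
        intro g hg f hf
        rcases Finset.mem_insert.1 hg with rfl | hg
        · exact (List.pairwise_cons.1 hpw).1 f hf
        · exact hPl g hg f (List.mem_cons_of_mem _ hf)
      rw [hunion]
      by_cases hcase : ∃ B ∈ Part, a ∈ B ∧ b ∈ B
      · -- skip the edge
        have hI' : KInv n (insert s(a, b) P) Part T := by
          refine ⟨hI.blocks_nonempty, hI.blocks_disj, hI.blocks_cover, hI.card_eq, ?_,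
            hI.TsubP.trans (Finset.subset_insert _ _), hI.TsubE, hI.reach⟩
          intro f hf
          rcases Finset.mem_insert.1 hf with rfl | hf
          · obtain ⟨B, hB, haB, hbB⟩ := hcase
            refine ⟨B, hB, fun v hv => ?_⟩
            rcases Sym2.mem_iff.1 hv with rfl | rfl
            exacts [haB, hbB]
          · exact hI.intra f hf
        have hslack : xsum x (insert s(a, b) P) ≤ (T.card : ℝ) :=
          hI'.xsum_le hx0 hpoly hP'E
        have Hx' : ∀ γ : ℝ, (∀ g ∈ insert s(a, b) P, ecost n c g ≤ γ) →
            (∀ f ∈ l, γ ≤ ecost n c f) →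
            fcost n c T ≤ xpcost c x (insert s(a, b) P) +
              γ * ((T.card : ℝ) - xsum x (insert s(a, b) P)) := by
          intro γ hγup _
          have hγe_le : ecost n c s(a, b) ≤ γ := hγup _ (Finset.mem_insert_self _ _)
          rw [hxpP', hxsumP']
          exact Hx_step hbase hγe_le (by rw [hxsumP'] at hslack; linarith)
        exact ih (insert s(a, b) P) Part T hI' hP'E hlE' hlP' hnd' hpw' hPl' Hx'
      · -- add the edge
        obtain ⟨Ba, hBa, haBa⟩ := hI.blocks_cover a
        obtain ⟨Bb, hBb, hbBb⟩ := hI.blocks_cover b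
        have hBab : Ba ≠ Bb := fun h => hcase ⟨Ba, hBa, haBa, h ▸ hbBb⟩
        set R := (Part.erase Ba).erase Bb with hR
        have hRmem : ∀ C, C ∈ R ↔ C ≠ Bb ∧ C ≠ Ba ∧ C ∈ Part := by
          intro C
          simp [hR, Finset.mem_erase, and_assoc]
        have hRsub : R ⊆ Part := fun C hC => (hRmem C).1 hC |>.2.2
        have hBbR : Bb ∈ Part.erase Ba := Finset.mem_erase.2 ⟨hBab.symm, hBb⟩
        have hUnotR : Ba ∪ Bb ∉ R := by
          intro hU
          have hne : Ba ∪ Bb ≠ Ba := ((hRmem _).1 hU).2.1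
          have hdisj := hI.blocks_disj _ (hRsub hU) Ba hBa hne
          exact (Finset.disjoint_left.1 hdisj) (Finset.mem_union_left _ haBa) haBa
        have henT : s(a, b) ∉ T := fun h => henP (hI.TsubP h)
        have hge2 : 2 ≤ Part.card := Finset.one_lt_card.2 ⟨Ba, hBa, Bb, hBb, hBab⟩
        have hcR : R.card = Part.card - 2 := by
          rw [hR, Finset.card_erase_of_mem hBbR, Finset.card_erase_of_mem hBa]; omega
        have hcPart' : (insert (Ba ∪ Bb) R).card = Part.card - 1 := by
          rw [Finset.card_insert_of_notMem hUnotR, hcR]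
          omega
        have hI' : KInv n (insert s(a, b) P) (insert (Ba ∪ Bb) R) (insert s(a, b) T) := by
          refine ⟨?_, ?_, ?_, ?_, ?_, ?_, ?_, ?_⟩
          · intro B hB
            rcases Finset.mem_insert.1 hB with rfl | hB
            · exact ⟨a, Finset.mem_union_left _ haBa⟩
            · exact hI.blocks_nonempty B (hRsub hB)
          · intro B₁ h₁ B₂ h₂ hne
            rcases Finset.mem_insert.1 h₁ with rfl | h₁ <;>
              rcases Finset.mem_insert.1 h₂ with rfl | h₂
            · exact absurd rfl hne
            · refine Finset.disjoint_union_left.2 ⟨?_, ?_⟩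
              · exact hI.blocks_disj Ba hBa B₂ (hRsub h₂) (fun h => ((hRmem _).1 h₂).2.1 h.symm)
              · exact hI.blocks_disj Bb hBb B₂ (hRsub h₂) (fun h => ((hRmem _).1 h₂).1 h.symm)
            · refine (Finset.disjoint_union_left.2 ⟨?_, ?_⟩).symm
              · exact hI.blocks_disj Ba hBa B₁ (hRsub h₁) (fun h => ((hRmem _).1 h₁).2.1 h.symm)
              · exact hI.blocks_disj Bb hBb B₁ (hRsub h₁) (fun h => ((hRmem _).1 h₁).1 h.symm)
            · exact hI.blocks_disj B₁ (hRsub h₁) B₂ (hRsub h₂) hne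
          · intro v
            obtain ⟨B, hB, hvB⟩ := hI.blocks_cover v
            by_cases h1 : B = Ba
            · exact ⟨Ba ∪ Bb, Finset.mem_insert_self _ _, Finset.mem_union_left _ (h1 ▸ hvB)⟩
            by_cases h2 : B = Bb
            · exact ⟨Ba ∪ Bb, Finset.mem_insert_self _ _, Finset.mem_union_right _ (h2 ▸ hvB)⟩
            · exact ⟨B, Finset.mem_insert_of_mem ((hRmem B).2 ⟨h2, h1, hB⟩), hvB⟩
          · rw [Finset.card_insert_of_notMem henT, hcPart']
            have := hI.card_eq
            omega
          · intro f hf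
            rcases Finset.mem_insert.1 hf with rfl | hf
            · refine ⟨Ba ∪ Bb, Finset.mem_insert_self _ _, fun v hv => ?_⟩
              rcases Sym2.mem_iff.1 hv with rfl | rfl
              · exact Finset.mem_union_left _ haBa
              · exact Finset.mem_union_right _ hbBb
            · obtain ⟨B, hB, hall⟩ := hI.intra f hf
              by_cases h1 : B = Ba
              · exact ⟨Ba ∪ Bb, Finset.mem_insert_self _ _,
                  fun v hv => Finset.mem_union_left _ (h1 ▸ hall v hv)⟩
              by_cases h2 : B = Bb
              · exact ⟨Ba ∪ Bb, Finset.mem_insert_self _ _,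
                  fun v hv => Finset.mem_union_right _ (h2 ▸ hall v hv)⟩
              · exact ⟨B, Finset.mem_insert_of_mem ((hRmem B).2 ⟨h2, h1, hB⟩), hall⟩
          · exact Finset.insert_subset_insert _ hI.TsubP
          · exact Finset.insert_subset heE hI.TsubE
          · have hmono : ∀ {u v : Fin n},
                (SimpleGraph.fromEdgeSet (T : Set (Sym2 (Fin n)))).Reachable u v →
                (SimpleGraph.fromEdgeSet ((insert s(a, b) T : Finset (Sym2 (Fin n))) :
                  Set (Sym2 (Fin n)))).Reachable u v := by
              intro u v h
              refine h.mono (SimpleGraph.fromEdgeSet_mono ?_)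
              exact_mod_cast Finset.coe_subset.2 (Finset.subset_insert _ _)
            have hadj : (SimpleGraph.fromEdgeSet ((insert s(a, b) T : Finset (Sym2 (Fin n))) :
                Set (Sym2 (Fin n)))).Adj a b := by
              rw [SimpleGraph.fromEdgeSet_adj]
              exact ⟨by simp, hab⟩
            intro B hB u hu v hv
            rcases Finset.mem_insert.1 hB with rfl | hBR
            · have key : ∀ w ∈ Ba ∪ Bb,
                  (SimpleGraph.fromEdgeSet ((insert s(a, b) T : Finset (Sym2 (Fin n))) :
                    Set (Sym2 (Fin n)))).Reachable w a := by
                intro w hw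
                rcases Finset.mem_union.1 hw with h | h
                · exact hmono (hI.reach Ba hBa w h a haBa)
                · exact (hmono (hI.reach Bb hBb w h b hbBb)).trans hadj.symm.reachable
              exact (key u hu).trans (key v hv).symm
            · exact hmono (hI.reach B (hRsub hBR) u hu v hv)
        have hslack : xsum x (insert s(a, b) P) ≤ ((insert s(a, b) T).card : ℝ) :=
          hI'.xsum_le hx0 hpoly hP'E
        rw [Finset.card_insert_of_notMem henT] at hslack
        push_cast at hslack
        have hfT' : fcost n c (insert s(a, b) T) = ecost n c s(a, b) + fcost n c T :=
          Finset.sum_insert henT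
        have Hx' : ∀ γ : ℝ, (∀ g ∈ insert s(a, b) P, ecost n c g ≤ γ) →
            (∀ f ∈ l, γ ≤ ecost n c f) →
            fcost n c (insert s(a, b) T) ≤ xpcost c x (insert s(a, b) P) +
              γ * (((insert s(a, b) T).card : ℝ) - xsum x (insert s(a, b) P)) := by
          intro γ hγup _
          have hγe_le : ecost n c s(a, b) ≤ γ := hγup _ (Finset.mem_insert_self _ _)
          have hbase' : fcost n c (insert s(a, b) T) ≤
              xpcost c x P + ecost n c s(a, b) * (((T.card : ℝ) + 1) - xsum x P) := by
            rw [hfT']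
            nlinarith [hbase]
          rw [hxpP', hxsumP', Finset.card_insert_of_notMem henT]
          push_cast
          exact Hx_step hbase' hγe_le (by rw [hxsumP'] at hslack; linarith)
        exact ih (insert s(a, b) P) (insert (Ba ∪ Bb) R) (insert s(a, b) T) hI' hP'E hlE'
          hlP' hnd' hpw' hPl' Hx'

lemma exists_good_tree (hn : 2 ≤ n) (c : Fin n → Fin n → ℝ) (x : Sym2 (Fin n) → ℝ)
    (hx0 : ∀ e, 0 ≤ x e)
    (hpoly : ∀ B : Finset (Fin n), B.Nonempty → xsum x (inSet n B) ≤ (B.card : ℝ) - 1)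
    (hxuniv : xsum x (Edges n) = (n : ℝ) - 1) :
    ∃ T : Finset (Sym2 (Fin n)), T ⊆ Edges n ∧
      (∀ a b : Fin n, (SimpleGraph.fromEdgeSet (T : Set (Sym2 (Fin n)))).Reachable a b) ∧
      fcost n c T ≤ xcost n c x := by
  obtain ⟨l, hnd, htf, hpw⟩ := exists_sorted_list (Edges n) (ecost n c)
  set Part₀ := Finset.univ.image (fun v : Fin n => ({v} : Finset (Fin n))) with hPart₀
  have hI₀ : KInv n ∅ Part₀ ∅ := by
    refine ⟨?_, ?_, ?_, ?_, ?_, ?_, ?_, ?_⟩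
    · intro B hB
      obtain ⟨v, -, rfl⟩ := Finset.mem_image.1 hB
      exact ⟨v, Finset.mem_singleton_self v⟩
    · intro B₁ h₁ B₂ h₂ hne
      obtain ⟨v₁, -, rfl⟩ := Finset.mem_image.1 h₁
      obtain ⟨v₂, -, rfl⟩ := Finset.mem_image.1 h₂
      rw [Finset.disjoint_left]
      intro w hw₁ hw₂
      rw [Finset.mem_singleton] at hw₁ hw₂
      exact hne (by rw [← hw₁, ← hw₂])
    · intro v
      exact ⟨{v}, Finset.mem_image_of_mem _ (Finset.mem_univ v), Finset.mem_singleton_self v⟩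
    · rw [Finset.card_empty, hPart₀,
        Finset.card_image_of_injective _ Finset.singleton_injective,
        Finset.card_univ, Fintype.card_fin]
      omega
    · intro e he
      exact absurd he (Finset.notMem_empty e)
    · exact Finset.empty_subset _
    · exact Finset.empty_subset _
    · intro B hB a ha b hb
      obtain ⟨v, -, rfl⟩ := Finset.mem_image.1 hB
      rw [Finset.mem_singleton] at ha hb
      subst ha; subst hb
      exact SimpleGraph.Reachable.refl _
  have Hx₀ : ∀ γ : ℝ, (∀ e ∈ (∅ : Finset (Sym2 (Fin n))), ecost n c e ≤ γ) →
      (∀ f ∈ l, γ ≤ ecost n c f) →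
      fcost n c (∅ : Finset (Sym2 (Fin n))) ≤ xpcost c x ∅ +
        γ * (((∅ : Finset (Sym2 (Fin n))).card : ℝ) - xsum x ∅) := by
    intro γ _ _
    simp [fcost, xpcost, xsum]
  obtain ⟨Part', T', hIf, Hf⟩ := kruskal_run c x hx0 hpoly l ∅ Part₀ ∅ hI₀
    (Finset.empty_subset _) (fun e he => htf ▸ List.mem_toFinset.2 he)
    (fun e _ => Finset.notMem_empty e) hnd hpw
    (fun e he => absurd he (Finset.notMem_empty e)) Hx₀
  have hPfin : ((∅ : Finset (Sym2 (Fin n))) ∪ l.toFinset) = Edges n := by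
    rw [Finset.empty_union, htf]
  rw [hPfin] at hIf Hf
  -- the final partition has a single block
  have hall : ∀ B₁ ∈ Part', ∀ B₂ ∈ Part', B₁ = B₂ := by
    intro B₁ h₁ B₂ h₂
    by_contra hne
    obtain ⟨u, hu⟩ := hIf.blocks_nonempty B₁ h₁
    obtain ⟨v, hv⟩ := hIf.blocks_nonempty B₂ h₂
    have huv : u ≠ v := by
      intro h
      exact (Finset.disjoint_left.1 (hIf.blocks_disj B₁ h₁ B₂ h₂ hne)) hu (h ▸ hv)
    have hE : s(u, v) ∈ Edges n := by
      simp only [Edges, Finset.mem_filter, Finset.mem_univ, true_and]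
      exact fun h => huv (Sym2.isDiag_iff_proj_eq.1 h)
    obtain ⟨B, hB, hallB⟩ := hIf.intra s(u, v) hE
    have huB : u ∈ B := hallB u (Sym2.mem_mk_left _ _)
    have hvB : v ∈ B := hallB v (Sym2.mem_mk_right _ _)
    have hB₁ : B = B₁ := by
      by_contra h
      exact (Finset.disjoint_left.1 (hIf.blocks_disj B hB B₁ h₁ h)) huB hu
    have hB₂ : B = B₂ := by
      by_contra h
      exact (Finset.disjoint_left.1 (hIf.blocks_disj B hB B₂ h₂ h)) hvB hv
    exact hne (hB₁ ▸ hB₂)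
  obtain ⟨B₀, hB₀, hvB₀⟩ := hIf.blocks_cover (⟨0, by omega⟩ : Fin n)
  have hsingle : Part' = {B₀} :=
    Finset.eq_singleton_iff_unique_mem.2 ⟨hB₀, fun B hB => hall B hB B₀ hB₀⟩
  have hcard1 : Part'.card = 1 := by rw [hsingle]; rfl
  have hTcard : T'.card + 1 = n := by
    have := hIf.card_eq
    omega
  refine ⟨T', hIf.TsubE, ?_, ?_⟩
  · intro a b
    have haB : a ∈ B₀ := by
      obtain ⟨B, hB, haB⟩ := hIf.blocks_cover a
      rwa [hall B hB B₀ hB₀] at haB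
    have hbB : b ∈ B₀ := by
      obtain ⟨B, hB, hbB⟩ := hIf.blocks_cover b
      rwa [hall B hB B₀ hB₀] at hbB
    exact hIf.reach B₀ hB₀ a haB b hbB
  · have hEne : (Edges n).Nonempty := by
      refine ⟨s((⟨0, by omega⟩ : Fin n), (⟨1, by omega⟩ : Fin n)), ?_⟩
      simp only [Edges, Finset.mem_filter, Finset.mem_univ, true_and]
      intro h
      have := Sym2.isDiag_iff_proj_eq.1 h
      simp at this
    have hmaxne : ((Edges n).image (ecost n c)).Nonempty := hEne.image _
    set γmax := ((Edges n).image (ecost n c)).max' hmaxne with hγmax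
    have hbound := Hf γmax (fun e he =>
      Finset.le_max' _ _ (Finset.mem_image_of_mem _ he))
    have hc1 : ((T'.card : ℕ) : ℝ) = (n : ℝ) - 1 := by
      have : ((T'.card + 1 : ℕ) : ℝ) = (n : ℝ) := by exact_mod_cast congrArg Nat.cast hTcard
      push_cast at this
      linarith
    rw [hc1, hxuniv] at hbound
    have hxp : xpcost c x (Edges n) = xcost n c x := rfl
    rw [hxp] at hbound
    simpa using hbound

/-- (Case B, large endpoint distance.) If `c(s,t) ≥ (1/3 + σ)·c(x)`
for some `σ > 0`, then there is a Hamiltonian `s`–`t` path of cost at most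
`(5/3 − σ)·c(x)`. -/
theorem case_B_large (n : ℕ) (hn : 2 ≤ n) (s t : Fin n) (hst : s ≠ t)
    (c : Fin n → Fin n → ℝ) (hc : IsMetric n c)
    (σ : ℝ) (hσ : 0 < σ)
    (x : Sym2 (Fin n) → ℝ) (hx : HKPathFeasible n s t x)
    (hfar : (1 / 3 + σ) * xcost n c x ≤ c s t) :
    ExistsHamPath n s t c ((5 / 3 - σ) * xcost n c x) := by
  have hx0 : ∀ e, 0 ≤ x e := hx.1
  have hpoly := hk_inSet_le hx hst
  have hxuniv := hk_xsum_univ hx hst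
  obtain ⟨Tf, hTfE, hTfreach, hTfcost⟩ := exists_good_tree hn c x hx0 hpoly hxuniv
  obtain ⟨T', hT'sub, hT'grown⟩ := grown_of_connected hTfreach s
  have hT'cost : fcost n c T' ≤ fcost n c Tf :=
    Finset.sum_le_sum_of_subset_of_nonneg hT'sub (fun e _ _ => ecost_nonneg hc.1 e)
  obtain ⟨l, hh, hla, hnd, htf, hlc⟩ :=
    hT'grown.hamlist hc s t (Finset.mem_univ s) (Finset.mem_univ t) hst
  obtain ⟨p, hsup, hsum⟩ := walk_of_list c hc.2.1 l s t hnd hh hla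
  refine ⟨p, ?_, ?_⟩
  · intro v
    rw [hsup]
    exact List.count_eq_one_of_mem hnd (List.mem_toFinset.1 (htf ▸ Finset.mem_univ v))
  · rw [hsum]
    have hX : fcost n c T' ≤ xcost n c x := le_trans hT'cost hTfcost
    calc listCost c l ≤ 2 * fcost n c T' - c s t := hlc
      _ ≤ 2 * xcost n c x - c s t := by linarith
      _ ≤ (5 / 3 - σ) * xcost n c x := by nlinarith [hfar]

end
end TSPPath
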